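/- Let q be a real number with 0 < q and q ≠ 1, let k be an odd positive integer, and let n ≥ 0 be an integer. Then 𝓔_{n,q} + 𝓔_{n,q}(k) = [2]_q ∑_{l=0}^{k−1} (−1)^l [l]_q^n (with the convention [0]_q^0 = 1). -/

import Mathlib

/-- The modified `q`-Euler polynomials
`𝓔_{n,q}(x) = [2]_q (1/(1-q))^n ∑_{l=0}^n C(n,l) (-1)^l q^{lx}/(1+q^l)`
(here `q ^ ((l : ℝ) * x)` is the real power `rpow`). -/
noncomputable def modqEulerPoly (q : ℝ) (n : ℕ) (x : ℝ) : ℝ :=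
  (1 + q) * (1 / (1 - q)) ^ n *
    ∑ l ∈ Finset.range (n + 1),
      (n.choose l : ℝ) * (-1) ^ l * q ^ ((l : ℝ) * x) / (1 + q ^ l)

/-- For odd positive `k`:
`𝓔_{n,q} + 𝓔_{n,q}(k) = [2]_q ∑_{l=0}^{k-1} (-1)^l [l]_q^n`. -/
theorem modqEuler_odd_sum (q : ℝ) (hq0 : 0 < q) (hq1 : q ≠ 1)
    (k : ℕ) (hk : 0 < k) (hko : Odd k) (n : ℕ) :
    modqEulerPoly q n 0 + modqEulerPoly q n (k : ℝ) =
      (1 + q) * ∑ l ∈ Finset.range k, (-1) ^ l * ((1 - q ^ l) / (1 - q)) ^ n := by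
  have hq : (1:ℝ) - q ≠ 0 := sub_ne_zero.mpr (Ne.symm hq1)
  have hd : ∀ j : ℕ, (1:ℝ) + q ^ j ≠ 0 := fun j => by positivity
  -- geometric sum key
  have key : ∀ j : ℕ, ∑ l ∈ Finset.range k, (-1:ℝ)^l * q^(j*l)
      = (1 + q^(j*k))/(1+q^j) := by
    intro j
    have h1 : ∀ l, (-1:ℝ)^l * q^(j*l) = (-(q^j))^l := fun l => by
      rw [pow_mul]; ring
    simp_rw [h1]
    have hx : (-(q^j):ℝ) ≠ 1 := by
      have := pow_pos hq0 j; linarith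
    rw [geom_sum_eq hx, hko.neg_pow, ← pow_mul,
      div_eq_div_iff (by have := pow_pos hq0 j; linarith) (hd j)]
    ring
  have hrpow0 : ∀ l : ℕ, q ^ ((l:ℝ) * (0:ℝ)) = 1 := fun l => by
    rw [mul_zero, Real.rpow_zero]
  have hrpowk : ∀ l : ℕ, q ^ ((l:ℝ) * (k:ℝ)) = q ^ (l*k) := fun l => by
    rw [show ((l:ℝ) * (k:ℝ)) = ((l*k : ℕ):ℝ) by push_cast; ring, Real.rpow_natCast]
  have binom : ∀ l : ℕ, (1 - q^l)^n
      = ∑ j ∈ Finset.range (n+1), (n.choose j : ℝ) * (-1)^j * q^(j*l) := by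
    intro l
    rw [sub_eq_add_neg, add_comm, add_pow]
    refine Finset.sum_congr rfl fun j _ => ?_
    rw [neg_pow, mul_comm j l, pow_mul]
    ring
  unfold modqEulerPoly
  simp_rw [hrpow0, hrpowk]
  rw [← mul_add, ← Finset.sum_add_distrib]
  have lhs_eq : ∀ j ∈ Finset.range (n+1),
      (n.choose j : ℝ) * (-1)^j * 1 / (1 + q^j) + (n.choose j : ℝ) * (-1)^j * q^(j*k) / (1 + q^j)
      = (n.choose j : ℝ) * (-1)^j * ((1 + q^(j*k))/(1+q^j)) := by
    intro j _
    rw [← add_div]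
    ring
  rw [Finset.sum_congr rfl lhs_eq]
  simp_rw [div_pow, binom, ← key, Finset.mul_sum, Finset.sum_div, Finset.mul_sum]
  rw [Finset.sum_comm]
  refine Finset.sum_congr rfl fun j _ => Finset.sum_congr rfl fun l _ => ?_
  field_simp
  try ring
  try tauto
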